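/- Let μ be a translation-invariant and reflection-invariant probability measure on {0,?,1}^ℤ. Then μ(?) ≥ μ(⟨***⟩) - 2μ(0?) + μ(?0?) - 2μ(100?) + 2μ(1⟨***⟩) + 2μ(1??1) + μ(1?1) + 4μ(1?01), where ⟨***⟩ denotes three consecutive coordinates lying in {0,?}³ \ {(0,0,0)} and concatenated strings denote cylinder events. -/

import Mathlib

open MeasureTheory

inductive PSym : Type
  | zero : PSym
  | quest : PSym
  | one : PSym
deriving DecidableEq

instance instFintypePSym : Fintype PSym :=
  ⟨{PSym.zero, PSym.quest, PSym.one}, fun x => by cases x <;> simp⟩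

instance : MeasurableSpace PSym := ⊤

abbrev Config : Type := ℤ → PSym

open PSym

/-- the symbol lies in `{0, ?}` -/
def lowQ (a : PSym) : Prop := a = PSym.zero ∨ a = PSym.quest

instance : DecidablePred lowQ := fun a => by unfold lowQ; infer_instance

/-- the window `(η k, η (k+1))` lies in `{0,?}² \ {(0,0)}` -/
def star2 (η : Config) (k : ℤ) : Prop :=
  lowQ (η k) ∧ lowQ (η (k + 1)) ∧ ¬(η k = PSym.zero ∧ η (k + 1) = PSym.zero)

/-- the window `(η k, η (k+1), η (k+2))` lies in `{0,?}³ \ {(0,0,0)}` -/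
def star3 (η : Config) (k : ℤ) : Prop :=
  lowQ (η k) ∧ lowQ (η (k + 1)) ∧ lowQ (η (k + 2)) ∧
    ¬(η k = PSym.zero ∧ η (k + 1) = PSym.zero ∧ η (k + 2) = PSym.zero)

/-- translation by `k` -/
def shiftBy (k : ℤ) (η : Config) : Config := fun n => η (n + k)

/-- reflection -/
def reflect (η : Config) : Config := fun n => η (-n)

/- ### auxiliary cylinder machinery -/

/-- Generalized cylinder: the coordinates starting at `k` successively lie in the sets of `w`. -/
def cylAt : ℤ → List (Set PSym) → Set Config
  | _, [] => Set.univ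
  | k, s :: w => {η : Config | η k ∈ s} ∩ cylAt (k + 1) w

lemma cylAt_nil (k : ℤ) : cylAt k [] = Set.univ := rfl

lemma cylAt_cons (k : ℤ) (s : Set PSym) (w : List (Set PSym)) :
    cylAt k (s :: w) = {η : Config | η k ∈ s} ∩ cylAt (k + 1) w := rfl

lemma measurable_shiftBy (k : ℤ) : Measurable (shiftBy k) :=
  measurable_pi_lambda _ fun n => measurable_pi_apply (n + k)

lemma measurable_reflect : Measurable reflect :=
  measurable_pi_lambda _ fun n => measurable_pi_apply (-n)

lemma cyl_meas : ∀ (w : List (Set PSym)) (k : ℤ), MeasurableSet (cylAt k w)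
  | [], _ => MeasurableSet.univ
  | s :: w, k =>
    ((measurable_pi_apply k) (MeasurableSpace.measurableSet_top)).inter (cyl_meas w (k + 1))

lemma cyl_append (u v : List (Set PSym)) : ∀ k : ℤ,
    cylAt k (u ++ v) = cylAt k u ∩ cylAt (k + u.length) v := by
  induction u with
  | nil => intro k; simp [cylAt_nil]
  | cons s u ih =>
    intro k
    rw [List.cons_append, cylAt_cons, cylAt_cons, ih (k + 1), Set.inter_assoc,
      List.length_cons]
    push_cast
    ring_nf

lemma shift_pre (k : ℤ) : ∀ (w : List (Set PSym)) (j : ℤ),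
    shiftBy k ⁻¹' cylAt j w = cylAt (j + k) w := by
  intro w
  induction w with
  | nil => intro j; simp [cylAt_nil]
  | cons s w ih =>
    intro j
    rw [cylAt_cons, cylAt_cons, Set.preimage_inter, ih (j + 1)]
    have h1 : shiftBy k ⁻¹' {η : Config | η j ∈ s} = {η : Config | η (j + k) ∈ s} := rfl
    rw [h1, show j + 1 + k = j + k + 1 by ring]

lemma refl_pre : ∀ (w : List (Set PSym)) (j : ℤ),
    reflect ⁻¹' cylAt j w = cylAt (1 - j - w.length) w.reverse := by
  intro w
  induction w with
  | nil => intro j; simp [cylAt_nil]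
  | cons s w ih =>
    intro j
    rw [cylAt_cons, Set.preimage_inter, ih (j + 1), List.reverse_cons, cyl_append]
    have h1 : reflect ⁻¹' {η : Config | η j ∈ s} = {η : Config | η (-j) ∈ s} := rfl
    have h2 : (1 : ℤ) - (j + 1) - (w.length : ℤ) = 1 - j - (((s :: w : List (Set PSym)).length : ℤ)) := by
      rw [List.length_cons]; push_cast; ring
    have h3 : (1 : ℤ) - j - (((s :: w : List (Set PSym)).length : ℤ)) + (w.reverse.length : ℤ) = -j := by
      rw [List.length_reverse, List.length_cons]; push_cast; ring
    rw [h1, h2, h3]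
    have h4 : cylAt (-j) [s] = {η : Config | η (-j) ∈ s} := by
      rw [cylAt_cons, cylAt_nil, Set.inter_univ]
    rw [h4, Set.inter_comm]

lemma mu_shift (μ : Measure Config) (hshift : ∀ k : ℤ, Measure.map (shiftBy k) μ = μ)
    (w : List (Set PSym)) (k : ℤ) : μ (cylAt k w) = μ (cylAt 0 w) := by
  have := Measure.map_apply (measurable_shiftBy k) (cyl_meas w 0) (μ := μ)
  rw [hshift k, shift_pre, zero_add] at this
  exact this.symm

lemma mu_refl (μ : Measure Config) (hshift : ∀ k : ℤ, Measure.map (shiftBy k) μ = μ)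
    (hrefl : Measure.map reflect μ = μ) (w : List (Set PSym)) :
    μ (cylAt 0 w) = μ (cylAt 0 w.reverse) := by
  have := Measure.map_apply measurable_reflect (cyl_meas w 0) (μ := μ)
  rw [hrefl, refl_pre] at this
  rw [this, mu_shift μ hshift]

lemma cyl_union (s t : Set PSym) (w2 : List (Set PSym)) :
    ∀ (w1 : List (Set PSym)) (k : ℤ),
    cylAt k (w1 ++ (s ∪ t) :: w2) = cylAt k (w1 ++ s :: w2) ∪ cylAt k (w1 ++ t :: w2) := by
  intro w1
  induction w1 with
  | nil =>
    intro k
    rw [List.nil_append, List.nil_append, List.nil_append, cylAt_cons, cylAt_cons, cylAt_cons]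
    rw [show {η : Config | η k ∈ s ∪ t} = {η : Config | η k ∈ s} ∪ {η : Config | η k ∈ t} from
      rfl, Set.union_inter_distrib_right]
  | cons a w1 ih =>
    intro k
    rw [List.cons_append, List.cons_append, List.cons_append, cylAt_cons, cylAt_cons,
      cylAt_cons, ih (k + 1), Set.inter_union_distrib_left]

lemma mem_cyl_pos {η : Config} {s : Set PSym} {w2 : List (Set PSym)}
    (w1 : List (Set PSym)) (k : ℤ) (h : η ∈ cylAt k (w1 ++ s :: w2)) :
    η (k + w1.length) ∈ s := by
  rw [cyl_append, cylAt_cons] at h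
  exact h.2.1

lemma cyl_disj {s t : Set PSym} (hst : Disjoint s t) (w2 : List (Set PSym))
    (w1 : List (Set PSym)) (k : ℤ) :
    Disjoint (cylAt k (w1 ++ s :: w2)) (cylAt k (w1 ++ t :: w2)) := by
  rw [Set.disjoint_left]
  intro η hs ht
  exact Set.disjoint_left.mp hst (mem_cyl_pos w1 k hs) (mem_cyl_pos w1 k ht)

/-- real-valued cylinder probability -/
noncomputable def pr (μ : Measure Config) (w : List (Set PSym)) : ℝ :=
  (μ (cylAt 0 w)).toReal

section
variable (μ : Measure Config) [IsProbabilityMeasure μ]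

lemma pr_split {s t : Set PSym} (hst : Disjoint s t) (w1 w2 : List (Set PSym)) :
    pr μ (w1 ++ (s ∪ t) :: w2) = pr μ (w1 ++ s :: w2) + pr μ (w1 ++ t :: w2) := by
  unfold pr
  rw [cyl_union, measure_union (cyl_disj hst w2 w1 0) (cyl_meas _ _),
    ENNReal.toReal_add (measure_ne_top μ _) (measure_ne_top μ _)]

lemma pr_refl (hshift : ∀ k : ℤ, Measure.map (shiftBy k) μ = μ)
    (hrefl : Measure.map reflect μ = μ) (w : List (Set PSym)) :
    pr μ w = pr μ w.reverse := by
  unfold pr; rw [mu_refl μ hshift hrefl]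

lemma pr_snoc_univ (w : List (Set PSym)) : pr μ (w ++ [Set.univ]) = pr μ w := by
  unfold pr
  rw [cyl_append]
  simp [cylAt_cons, cylAt_nil]

lemma pr_cons_univ (hshift : ∀ k : ℤ, Measure.map (shiftBy k) μ = μ)
    (w : List (Set PSym)) : pr μ (Set.univ :: w) = pr μ w := by
  unfold pr
  have : cylAt 0 (Set.univ :: w) = cylAt 1 w := by
    rw [cylAt_cons]; simp
  rw [this, mu_shift μ hshift]

end

theorem stmt9 (μ : Measure Config) [IsProbabilityMeasure μ]
    (hshift : ∀ k : ℤ, Measure.map (shiftBy k) μ = μ)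
    (hrefl : Measure.map reflect μ = μ) :
    (μ {η | η 0 = quest}).toReal ≥
      (μ {η | star3 η 0}).toReal - 2 * (μ {η | η 0 = zero ∧ η 1 = quest}).toReal +
        (μ {η | η 0 = quest ∧ η 1 = zero ∧ η 2 = quest}).toReal -
        2 * (μ {η | η 0 = one ∧ η 1 = zero ∧ η 2 = zero ∧ η 3 = quest}).toReal +
        2 * (μ {η | η 0 = one ∧ star3 η 1}).toReal +
        2 * (μ {η | η 0 = one ∧ η 1 = quest ∧ η 2 = quest ∧ η 3 = one}).toReal +
        (μ {η | η 0 = one ∧ η 1 = quest ∧ η 2 = one}).toReal +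
        4 * (μ {η | η 0 = one ∧ η 1 = quest ∧ η 2 = zero ∧ η 3 = one}).toReal := by
  classical
  set Z : Set PSym := {PSym.zero} with hZdef
  set Q : Set PSym := {PSym.quest} with hQdef
  set O : Set PSym := {PSym.one} with hOdef
  set L : Set PSym := {PSym.zero, PSym.quest} with hLdef
  have hL : L = Z ∪ Q := by
    ext a; simp [hZdef, hQdef, hLdef]; tauto
  have hU : (Set.univ : Set PSym) = L ∪ O := by
    ext a; cases a <;> simp [hLdef, hOdef]
  have dZQ : Disjoint Z Q := by
    rw [Set.disjoint_left]; rintro a rfl h; simp [hQdef] at h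
  have dLO : Disjoint L O := by
    rw [Set.disjoint_left]; rintro a (rfl | rfl) h <;> simp [hOdef] at h
  -- abbreviation
  set p : List (Set PSym) → ℝ := pr μ with hpdef
  -- splitting helpers
  have snocLO : ∀ w, p w = p (w ++ [L]) + p (w ++ [O]) := by
    intro w
    have h := pr_split μ dLO w []
    rw [← hU, ← hpdef] at h
    have h2 : p (w ++ [Set.univ]) = p w := pr_snoc_univ μ w
    exact h2.symm.trans h
  have snocZQ : ∀ w, p (w ++ [L]) = p (w ++ [Z]) + p (w ++ [Q]) := by
    intro w
    have h := pr_split μ dZQ w []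
    rw [← hL, ← hpdef] at h
    exact h
  have consLO : ∀ w, p w = p (L :: w) + p (O :: w) := by
    intro w
    have h := pr_split μ dLO [] w
    rw [← hU, ← hpdef] at h
    simp only [List.nil_append] at h
    have h2 : p (Set.univ :: w) = p w := pr_cons_univ μ hshift w
    exact h2.symm.trans h
  have consZQ : ∀ w, p (L :: w) = p (Z :: w) + p (Q :: w) := by
    intro w
    have h := pr_split μ dZQ [] w
    rw [← hL, ← hpdef] at h
    simpa using h
  -- L-splits
  have F1 : p [L,L,L] = p [Z,L,L] + p [Q,L,L] := consZQ [L,L]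
  have F2 : p [Z,L,L] = p [Z,Z,L] + p [Z,Q,L] := by
    have h := pr_split μ dZQ [Z] [L]; rw [← hL, ← hpdef] at h; simpa using h
  have F3 : p [Z,Z,L] = p [Z,Z,Z] + p [Z,Z,Q] := by
    have h := snocZQ [Z,Z]; simpa using h
  have F4 : p [O,L,L,L] = p [O,Z,L,L] + p [O,Q,L,L] := by
    have h := pr_split μ dZQ [O] [L,L]; rw [← hL, ← hpdef] at h; simpa using h
  have F5 : p [O,Z,L,L] = p [O,Z,Z,L] + p [O,Z,Q,L] := by
    have h := pr_split μ dZQ [O,Z] [L]; rw [← hL, ← hpdef] at h; simpa using h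
  have F6 : p [O,Z,Z,L] = p [O,Z,Z,Z] + p [O,Z,Z,Q] := by
    have h := snocZQ [O,Z,Z]; simpa using h
  -- univ extensions
  have G1a : p [Z,Q] = p [Z,Q,L] + p [Z,Q,O] := by
    have h1 := snocLO [Z,Q]; simpa using h1
  have G2a : p [Z,Q] = p [L,Z,Q] + p [O,Z,Q] := consLO [Z,Q]
  have G2b : p [L,Z,Q] = p [Z,Z,Q] + p [Q,Z,Q] := consZQ [Z,Q]
  have G3 : p [Q] = p [Q,L] + p [Q,O] := by have h := snocLO [Q]; simpa using h
  have G4 : p [Q,L] = p [Q,L,L] + p [Q,L,O] := by have h := snocLO [Q,L]; simpa using h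
  have G5 : p [Q,L,O] = p [Q,Z,O] + p [Q,Q,O] := by
    have h := pr_split μ dZQ [Q] [O]; rw [← hL, ← hpdef] at h; simpa using h
  have G6 : p [O,Q] = p [O,Q,L] + p [O,Q,O] := by have h := snocLO [O,Q]; simpa using h
  have G7 : p [O,Q,L] = p [O,Q,Z] + p [O,Q,Q] := by
    have h := snocZQ [O,Q]; simpa using h
  have G8 : p [O,Q,L,L] = p [O,Q,Z,L] + p [O,Q,Q,L] := by
    have h := pr_split μ dZQ [O,Q] [L]; rw [← hL, ← hpdef] at h; simpa using h
  have G9a : p [O,Q,Z] = p [O,Q,Z,L] + p [O,Q,Z,O] := by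
    have h := snocLO [O,Q,Z]; simpa using h
  have G10a : p [O,Q,Q] = p [O,Q,Q,L] + p [O,Q,Q,O] := by
    have h := snocLO [O,Q,Q]; simpa using h
  have G11a : p [O,Z,Q] = p [O,Z,Q,L] + p [O,Z,Q,O] := by
    have h := snocLO [O,Z,Q]; simpa using h
  -- reflections
  have R1 : p [Q,Z,O] = p [O,Z,Q] := by
    have h := pr_refl μ hshift hrefl [Q,Z,O]; simpa using h
  have R2 : p [Q,Q,O] = p [O,Q,Q] := by
    have h := pr_refl μ hshift hrefl [Q,Q,O]; simpa using h
  have R3 : p [Q,O] = p [O,Q] := by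
    have h := pr_refl μ hshift hrefl [Q,O]; simpa using h
  have R4 : p [O,Z,Q,O] = p [O,Q,Z,O] := by
    have h := pr_refl μ hshift hrefl [O,Z,Q,O]; simpa using h
  have R5 : p [Z,Q,O] = p [O,Q,Z] := by
    have h := pr_refl μ hshift hrefl [Z,Q,O]; simpa using h
  -- identification of the sets in the statement with cylinders
  have memZ : ∀ a : PSym, a ∈ Z ↔ a = PSym.zero := by intro a; simp [hZdef]
  have memQ : ∀ a : PSym, a ∈ Q ↔ a = PSym.quest := by intro a; simp [hQdef]
  have memO : ∀ a : PSym, a ∈ O ↔ a = PSym.one := by intro a; simp [hOdef]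
  have memL : ∀ a : PSym, a ∈ L ↔ lowQ a := by intro a; simp [hLdef, lowQ]
  have hS1 : {η : Config | η 0 = quest} = cylAt 0 [Q] := by
    ext η
    simp [cylAt_cons, cylAt_nil, memQ]
  have hS2 : {η : Config | η 0 = zero ∧ η 1 = quest} = cylAt 0 [Z, Q] := by
    ext η
    simp [cylAt_cons, cylAt_nil, memQ, memZ]

  have hS3 : {η : Config | η 0 = quest ∧ η 1 = zero ∧ η 2 = quest} = cylAt 0 [Q, Z, Q] := by
    ext η
    simp [cylAt_cons, cylAt_nil, memQ, memZ]

  have hS4 : {η : Config | η 0 = one ∧ η 1 = zero ∧ η 2 = zero ∧ η 3 = quest}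
      = cylAt 0 [O, Z, Z, Q] := by
    ext η
    simp [cylAt_cons, cylAt_nil, memQ, memZ, memO]

  have hS7 : {η : Config | η 0 = one ∧ η 1 = quest ∧ η 2 = quest ∧ η 3 = one}
      = cylAt 0 [O, Q, Q, O] := by
    ext η
    simp [cylAt_cons, cylAt_nil, memQ, memO]

  have hS8 : {η : Config | η 0 = one ∧ η 1 = quest ∧ η 2 = one} = cylAt 0 [O, Q, O] := by
    ext η
    simp [cylAt_cons, cylAt_nil, memQ, memO]

  have hS9 : {η : Config | η 0 = one ∧ η 1 = quest ∧ η 2 = zero ∧ η 3 = one}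
      = cylAt 0 [O, Q, Z, O] := by
    ext η
    simp [cylAt_cons, cylAt_nil, memQ, memZ, memO]

  have hsub1 : cylAt 0 [Z,Z,Z] ⊆ cylAt 0 [L,L,L] := by
    intro η h
    simp only [cylAt_cons, cylAt_nil, Set.mem_inter_iff, Set.mem_setOf_eq, Set.mem_univ,
      and_true] at h ⊢
    refine ⟨?_, ?_, ?_⟩ <;> rw [memL] <;> rw [memZ] at h
    · exact Or.inl h.1
    · exact Or.inl ((memZ _).mp h.2.1)
    · exact Or.inl ((memZ _).mp h.2.2)
  have hsub2 : cylAt 0 [O,Z,Z,Z] ⊆ cylAt 0 [O,L,L,L] := by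
    intro η h
    simp only [cylAt_cons, cylAt_nil, Set.mem_inter_iff, Set.mem_setOf_eq, Set.mem_univ,
      and_true] at h ⊢
    refine ⟨h.1, ?_, ?_, ?_⟩ <;> rw [memL]
    · exact Or.inl ((memZ _).mp h.2.1)
    · exact Or.inl ((memZ _).mp h.2.2.1)
    · exact Or.inl ((memZ _).mp h.2.2.2)
  have hStar : {η : Config | star3 η 0} = cylAt 0 [L,L,L] \ cylAt 0 [Z,Z,Z] := by
    ext η
    simp only [cylAt_cons, cylAt_nil, Set.mem_inter_iff, Set.mem_setOf_eq, Set.mem_univ,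
      and_true, Set.mem_diff, memL, memZ, star3]
    norm_num
    tauto
  have hStar1 : {η : Config | η 0 = one ∧ star3 η 1} = cylAt 0 [O,L,L,L] \ cylAt 0 [O,Z,Z,Z] := by
    ext η
    simp only [cylAt_cons, cylAt_nil, Set.mem_inter_iff, Set.mem_setOf_eq, Set.mem_univ,
      and_true, Set.mem_diff, memL, memZ, memO, star3]
    norm_num
    tauto
  -- measures of the star events
  have dstar : (μ {η : Config | star3 η 0}).toReal = p [L,L,L] - p [Z,Z,Z] := by
    rw [hStar, measure_diff hsub1 (cyl_meas _ _).nullMeasurableSet (measure_ne_top μ _),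
      ENNReal.toReal_sub_of_le (measure_mono hsub1) (measure_ne_top μ _)]
    rfl
  have dstar1 : (μ {η : Config | η 0 = one ∧ star3 η 1}).toReal
      = p [O,L,L,L] - p [O,Z,Z,Z] := by
    rw [hStar1, measure_diff hsub2 (cyl_meas _ _).nullMeasurableSet (measure_ne_top μ _),
      ENNReal.toReal_sub_of_le (measure_mono hsub2) (measure_ne_top μ _)]
    rfl
  rw [hS1, hS2, hS3, hS4, hS7, hS8, hS9, dstar, dstar1]
  show p [Q] ≥ (p [L,L,L] - p [Z,Z,Z]) - 2 * p [Z,Q] + p [Q,Z,Q] - 2 * p [O,Z,Z,Q]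
      + 2 * (p [O,L,L,L] - p [O,Z,Z,Z]) + 2 * p [O,Q,Q,O] + p [O,Q,O] + 4 * p [O,Q,Z,O]
  linarith
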